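/- In the Brylawski–Ziegler construction, let X be a covector support of M̂ (a union of cocircuits of M̂) contained in E ∪ A (i.e., X ∩ B = ∅), and let rk_{L̂} denote rank in the lattice of unions of cocircuits of M̂. Then rk_{L̂}(X) = rk_L(X ∩ E), where rk_L is the corresponding lattice rank in M. -/

import Mathlib

open Set Matroid
namespace NL
variable {γ : Type*}

/-- Rank of a set in a matroid: the max size of an independent subset. -/
noncomputable def rk (M : Matroid γ) (X : Set γ) : ℕ :=
  sSup {n | ∃ I, M.Indep I ∧ I ⊆ X ∧ I.ncard = n}

/-- A cocircuit: a minimal set meeting every base. -/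
def Cocircuit (M : Matroid γ) (D : Set γ) : Prop :=
  D ⊆ M.E ∧ (∀ B, M.IsBase B → (D ∩ B).Nonempty) ∧
    ∀ D' ⊂ D, ∃ B, M.IsBase B ∧ D' ∩ B = ∅

/-- A loop: an element contained in no independent set. -/
def MLoop (M : Matroid γ) (e : γ) : Prop := e ∈ M.E ∧ ¬ M.Indep {e}

/-- Parallel elements: distinct non-loops forming a dependent pair. -/
def MParallel (M : Matroid γ) (e f : γ) : Prop :=
  e ≠ f ∧ M.Indep {e} ∧ M.Indep {f} ∧ ¬ M.Indep {e, f}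

/-- Deletion of the set `X`. -/
noncomputable def mdelete (M : Matroid γ) (X : Set γ) : Matroid γ := M ↾ (M.E \ X)

/-- Contraction of the set `X`, defined by duality. -/
noncomputable def mcontract (M : Matroid γ) (X : Set γ) : Matroid γ := (M✶ ↾ (M✶.E \ X))✶

/-- `X` is a union of cocircuits of `M` (equivalently, the complement of a flat). -/
def UnionOfCocircuits (M : Matroid γ) (X : Set γ) : Prop :=
  ∃ S : Set (Set γ), (∀ D ∈ S, Cocircuit M D) ∧ X = ⋃₀ S

/-- The rank of `X` in the lattice of unions of cocircuits of `M` ordered by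
inclusion: the maximal length of a chain from `∅` to `X` in this lattice. -/
noncomputable def latticeRk (M : Matroid γ) (X : Set γ) : ℕ :=
  sSup {k | ∃ c : Fin (k+1) → Set γ, StrictMono c ∧ (∀ i, UnionOfCocircuits M (c i)) ∧
    c 0 = ∅ ∧ c (Fin.last k) = X}


lemma MParallel.symm {M : Matroid γ} {e f : γ} (h : MParallel M e f) : MParallel M f e :=
  ⟨h.1.symm, h.2.2.1, h.2.1, by rw [Set.pair_comm]; exact h.2.2.2⟩

lemma MParallel.not_both {M : Matroid γ} {e f : γ} {I : Set γ} (h : MParallel M e f)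
    (hI : M.Indep I) (he : e ∈ I) (hf : f ∈ I) : False :=
  h.2.2.2 (hI.subset (Set.pair_subset he hf))

lemma parallel_swap {M : Matroid γ} {e f : γ} {I : Set γ} (hef : MParallel M e f)
    (hI : M.Indep I) (heI : e ∈ I) (_hfI : f ∉ I) : M.Indep (insert f (I \ {e})) := by
  obtain ⟨hne, he, hf, hd⟩ := hef
  have hfE : f ∈ M.E := hf.subset_ground rfl
  have heE : e ∈ M.E := he.subset_ground rfl
  have hecl : e ∈ M.closure {f} := by
    by_contra hc
    exact hd (hf.insert_indep_iff.mpr (Or.inl ⟨heE, hc⟩))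
  have hIe : M.Indep (I \ {e}) := hI.subset diff_subset
  have hfcl : f ∉ M.closure (I \ {e}) := by
    intro hfc
    have hsub : M.closure {f} ⊆ M.closure (I \ {e}) :=
      M.closure_subset_closure_of_subset_closure (by simpa)
    exact hI.notMem_closure_diff_of_mem heI (hsub hecl)
  exact hIe.insert_indep_iff.mpr (Or.inl ⟨hfE, hfcl⟩)

/-! ### Generic extension-matroid characterization -/

section Char
variable {n : ℕ} {N N₀ : Matroid ℕ} {P : Set ℕ}

/-- projection collapsing the shifted copies -/
def pr (n x : ℕ) : ℕ := if n < x then x - n else x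

variable (hEN : N.E = Set.Icc 1 (2*n)) (hres : N ↾ (Set.Icc 1 n) = N₀)
  (hP : P ⊆ Set.Icc 1 n)
  (hpar : ∀ i ∈ P, MParallel N i (n+i))
  (hloop : ∀ i ∈ Set.Icc 1 n \ P, MLoop N (n+i))

include hEN hres hP hpar hloop

lemma char_fwd {J : Set ℕ} (hJ : N.Indep J) :
    J ⊆ Set.Icc 1 n ∪ (fun i => n+i) '' P ∧ Set.InjOn (pr n) J ∧ N₀.Indep (pr n '' J) := by
  have hJE : J ⊆ Set.Icc 1 (2*n) := hEN ▸ hJ.subset_ground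
  -- every element of J above n is a shifted parallel element
  have key : ∀ x ∈ J, n < x → (x - n) ∈ P ∧ x = n + (x - n) := by
    intro x hx hnx
    have hx2 : x ≤ 2*n := (hJE hx).2
    have hi : x - n ∈ Set.Icc 1 n := by simp only [Set.mem_Icc]; omega
    have hxn : x = n + (x - n) := by omega
    constructor
    · by_contra hiP
      have := (hloop _ ⟨hi, hiP⟩).2
      exact this (by rw [← hxn]; exact hJ.subset (Set.singleton_subset_iff.mpr hx))
    · exact hxn
  have main : ∀ a ∈ J, ∀ b ∈ J, a < b → pr n a = pr n b → False := by
    intro a ha b hb hlt hab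
    have ha2 : a ∈ Set.Icc 1 (2*n) := hJE ha
    have hb2 : b ∈ Set.Icc 1 (2*n) := hJE hb
    simp only [pr] at hab
    split_ifs at hab with h1 h2 h2
    · omega
    · omega
    · obtain ⟨hbP, hbe⟩ := key b hb h2
      have hPar := hpar _ hbP
      rw [← hbe] at hPar
      rw [← hab] at hPar
      exact hPar.not_both hJ ha hb
    · omega
  have hinj : Set.InjOn (pr n) J := by
    intro a ha b hb hab
    by_contra hne
    rcases Nat.lt_or_ge a b with h | h
    · exact main a ha b hb h hab
    · exact main b hb a ha (by omega) hab.symm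
  refine ⟨?_, hinj, ?_⟩
  · intro x hx
    rcases le_or_gt x n with h | h
    · exact Or.inl ⟨(hJE hx).1, h⟩
    · obtain ⟨hP', he⟩ := key x hx h
      exact Or.inr ⟨x - n, hP', he.symm⟩
  · -- induction on the number of elements above n
    clear hinj main
    have hfin : J.Finite := Set.Finite.subset (Set.finite_Icc 1 (2*n)) hJE
    generalize hk : (J ∩ Set.Ioi n).ncard = k
    induction k generalizing J with
    | zero =>
      have hJn : J ⊆ Set.Icc 1 n := by
        intro x hx
        have := hJE hx
        rcases le_or_gt x n with h | h
        · exact ⟨this.1, h⟩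
        · exfalso
          have : x ∈ J ∩ Set.Ioi n := ⟨hx, h⟩
          have hne : (J ∩ Set.Ioi n).Nonempty := ⟨x, this⟩
          rw [← Set.ncard_pos (hfin.inter_of_left _)] at hne
          omega
      have himg : pr n '' J = J := by
        have heq : Set.EqOn (pr n) id J := by
          intro x hx
          have := hJn hx
          simp only [Set.mem_Icc] at this
          simp only [pr, id]
          split_ifs <;> omega
        rw [heq.image_eq, Set.image_id]
      rw [himg, ← hres]
      exact Matroid.restrict_indep_iff.mpr ⟨hJ, hJn⟩
    | succ k ih =>
      have hne : (J ∩ Set.Ioi n).Nonempty := by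
        rw [← Set.ncard_pos (hfin.inter_of_left _)]
        omega
      obtain ⟨x, hxJ, hxn⟩ := hne
      simp only [Set.mem_Ioi] at hxn
      obtain ⟨hiP, hxe⟩ := key x hxJ hxn
      set i := x - n with hidef
      have hiIcc : i ∈ Set.Icc 1 n := hP hiP
      have hiJ : i ∉ J := by
        intro hiJ
        have hPar := hpar _ hiP
        rw [← hxe] at hPar
        exact hPar.not_both hJ hiJ hxJ
      set J' := insert i (J \ {x}) with hJ'def
      have hJ'indep : N.Indep J' := by
        have hPar := (hpar _ hiP).symm
        rw [← hxe] at hPar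
        exact parallel_swap hPar hJ hxJ hiJ
      have hJ'E : J' ⊆ Set.Icc 1 (2*n) := hEN ▸ hJ'indep.subset_ground
      have hJ'fin : J'.Finite := Set.Finite.subset (Set.finite_Icc 1 (2*n)) hJ'E
      have hkey' : ∀ y ∈ J', n < y → (y - n) ∈ P ∧ y = n + (y - n) := by
        intro y hy hny
        rcases hy with rfl | ⟨hyJ, _⟩
        · exfalso; simp only [Set.mem_Icc] at hiIcc; omega
        · exact key y hyJ hny
      have hcard : (J' ∩ Set.Ioi n).ncard = k := by
        have : J' ∩ Set.Ioi n = (J ∩ Set.Ioi n) \ {x} := by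
          ext y
          simp only [hJ'def, Set.mem_inter_iff, Set.mem_insert_iff, Set.mem_diff,
            Set.mem_singleton_iff, Set.mem_Ioi]
          constructor
          · rintro ⟨rfl | ⟨hyJ, hyx⟩, hy⟩
            · exfalso; simp only [Set.mem_Icc] at hiIcc; omega
            · exact ⟨⟨hyJ, hy⟩, hyx⟩
          · rintro ⟨⟨hyJ, hy⟩, hyx⟩
            exact ⟨Or.inr ⟨hyJ, hyx⟩, hy⟩
        rw [this, Set.ncard_diff_singleton_of_mem (Set.mem_inter hxJ (Set.mem_Ioi.mpr hxn)), hk]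
        omega
      have hrec := ih hJ'indep hJ'E hkey' hJ'fin hcard
      have himg : pr n '' J' = pr n '' J := by
        have h1 : pr n x = i := by simp only [pr, if_pos hxn, hidef]
        have h2 : pr n i = i := by
          simp only [Set.mem_Icc] at hiIcc
          unfold pr
          rw [if_neg (by omega : ¬ n < i)]
        rw [hJ'def, Set.image_insert_eq, h2]
        have : J = insert x (J \ {x}) := by
          rw [Set.insert_diff_singleton, Set.insert_eq_of_mem hxJ]
        conv_rhs => rw [this]
        rw [Set.image_insert_eq, h1]
      rw [← himg]
      exact hrec

lemma char_bwd {W S : Set ℕ} (hW : N₀.Indep W) (hS : S ⊆ W ∩ P) :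
    N.Indep ((W \ S) ∪ (fun i => n+i) '' S) := by
  have hWn : W ⊆ Set.Icc 1 n := by
    have := hW.subset_ground
    rwa [← hres, Matroid.restrict_ground_eq] at this
  have hWN : N.Indep W := by
    rw [← hres] at hW
    exact hW.of_restrict
  have hSfin : S.Finite := Set.Finite.subset (Set.finite_Icc 1 n)
    (hS.trans ((Set.inter_subset_left).trans hWn))
  suffices main : ∀ T : Set ℕ, T.Finite → T ⊆ W ∩ P → N.Indep ((W \ T) ∪ (fun i => n+i) '' T) by
    exact main S hSfin hS
  intro T hTfin
  refine Set.Finite.induction_on T hTfin ?_ ?_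
  · intro _; simpa using hWN
  · intro a s has hsfin ih hins
    have hsWP : s ⊆ W ∩ P := (Set.subset_insert a s).trans hins
    have haW : a ∈ W := (hins (Set.mem_insert a s)).1
    have haP : a ∈ P := (hins (Set.mem_insert a s)).2
    have haIcc : a ∈ Set.Icc 1 n := hP haP
    have hK := ih hsWP
    set K := (W \ s) ∪ (fun i => n+i) '' s with hKdef
    have haK : a ∈ K := Or.inl ⟨haW, has⟩
    have hnaK : n + a ∉ K := by
      rintro (⟨hna, -⟩ | ⟨b, hbs, hba⟩)
      · have := hWn hna
        simp only [Set.mem_Icc] at this haIcc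
        omega
      · have : b = a := Nat.add_left_cancel hba
        exact has (this ▸ hbs)
    have hswap := parallel_swap (hpar _ haP) hK haK hnaK
    have heq : insert (n+a) (K \ {a}) = (W \ insert a s) ∪ (fun i => n+i) '' insert a s := by
      rw [Set.image_insert_eq]
      ext y
      simp only [hKdef, Set.mem_insert_iff, Set.mem_diff, Set.mem_union, Set.mem_image,
        Set.mem_singleton_iff]
      constructor
      · rintro (rfl | ⟨(⟨hyW, hys⟩ | ⟨b, hbs, hby⟩), hya⟩)
        · exact Or.inr (Or.inl rfl)
        · exact Or.inl ⟨hyW, by tauto⟩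
        · exact Or.inr (Or.inr ⟨b, hbs, hby⟩)
      · rintro (⟨hyW, hy⟩ | (rfl | ⟨b, hbs, hby⟩))
        · have hya : y ≠ a := fun h => hy (Or.inl h)
          exact Or.inr ⟨Or.inl ⟨hyW, fun h => hy (Or.inr h)⟩, hya⟩
        · exact Or.inl rfl
        · refine Or.inr ⟨Or.inr ⟨b, hbs, hby⟩, ?_⟩
          have hb : b ∈ Set.Icc 1 n := hP (hsWP hbs).2
          simp only [Set.mem_Icc] at hb haIcc
          omega
      
    rwa [heq] at hswap

end Char

/-- `Z` contains a base. -/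
def Spn (M : Matroid γ) (Z : Set γ) : Prop := ∃ B, M.IsBase B ∧ B ⊆ Z

lemma cocircuit_iff_spn {M : Matroid γ} {D : Set γ} :
    Cocircuit M D ↔ D ⊆ M.E ∧ ¬ Spn M (M.E \ D) ∧ ∀ d ∈ D, Spn M (M.E \ (D \ {d})) := by
  constructor
  · rintro ⟨hDE, hmeet, hmin⟩
    refine ⟨hDE, ?_, ?_⟩
    · rintro ⟨B, hB, hBsub⟩
      obtain ⟨x, hxD, hxB⟩ := hmeet B hB
      exact (hBsub hxB).2 hxD
    · intro d hd
      obtain ⟨B, hB, hempty⟩ := hmin _ (Set.sdiff_singleton_ssubset.mpr hd)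
      refine ⟨B, hB, fun x hx => ⟨hB.subset_ground hx, fun hxD =>
        Set.eq_empty_iff_forall_notMem.mp hempty x ⟨hxD, hx⟩⟩⟩
  · rintro ⟨hDE, hnspn, hmin⟩
    refine ⟨hDE, ?_, ?_⟩
    · intro B hB
      by_contra h
      rw [Set.not_nonempty_iff_eq_empty] at h
      refine hnspn ⟨B, hB, fun x hx => ⟨hB.subset_ground hx, fun hxD => ?_⟩⟩
      have : x ∈ D ∩ B := ⟨hxD, hx⟩
      rw [h] at this
      exact this
    · intro D' hsub
      obtain ⟨d, hdD, hdD'⟩ := Set.exists_of_ssubset hsub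
      obtain ⟨B, hB, hBsub⟩ := hmin d hdD
      refine ⟨B, hB, ?_⟩
      rw [Set.eq_empty_iff_forall_notMem]
      rintro x ⟨hxD', hxB⟩
      exact (hBsub hxB).2 ⟨hsub.subset hxD', fun hxd => hdD' (Set.mem_singleton_iff.mp hxd ▸ hxD')⟩

lemma encard_IccN (a b : ℕ) : (Set.Icc a b).encard = ((b+1-a : ℕ) : ℕ∞) := by
  rw [← Finset.coe_Icc, Set.encard_coe_eq_coe_finsetCard, Nat.card_Icc]

lemma diff_Icc1 {n r : ℕ} : Set.Icc 1 n \ Set.Icc 1 r = Set.Icc (r+1) n := by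
  ext x; simp only [Set.mem_diff, Set.mem_Icc, not_and, not_le]; omega

lemma diff_Icc2 {n r : ℕ} (hrn : r ≤ n) : Set.Icc 1 n \ Set.Icc (r+1) n = Set.Icc 1 r := by
  ext x; simp only [Set.mem_diff, Set.mem_Icc, not_and, not_le]; omega

section BZ

variable {n r : ℕ} {M M₁ M₂ Mhat : Matroid ℕ}

lemma Mdual_base (hME : M.E = Set.Icc 1 n) (hMB : M.IsBase (Set.Icc 1 r)) :
    M✶.IsBase (Set.Icc (r+1) n) := by
  have h := hMB.compl_isBase_dual
  rwa [hME, diff_Icc1] at h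

lemma M_indep_encard (hMB : M.IsBase (Set.Icc 1 r)) {I : Set ℕ} (hI : M.Indep I) :
    I.encard ≤ (r : ℕ∞) := by
  obtain ⟨B', hB', hsub⟩ := hI.exists_isBase_superset
  have h1 : B'.encard = (Set.Icc 1 r).encard := hB'.encard_eq_encard_of_isBase hMB
  have h2 : (Set.Icc 1 r).encard = ((r : ℕ) : ℕ∞) := by
    rw [encard_IccN]; congr 1
  exact le_of_le_of_eq (Set.encard_le_encard hsub) (h1.trans h2)

lemma Mdual_indep_encard (hrn : r ≤ n) (hME : M.E = Set.Icc 1 n)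
    (hMB : M.IsBase (Set.Icc 1 r)) {I : Set ℕ} (hI : M✶.Indep I) :
    I.encard ≤ ((n - r : ℕ) : ℕ∞) := by
  obtain ⟨B', hB', hsub⟩ := hI.exists_isBase_superset
  have h1 : B'.encard = (Set.Icc (r+1) n).encard := hB'.encard_eq_encard_of_isBase (Mdual_base hME hMB)
  have h2 : (Set.Icc (r+1) n).encard = ((n - r : ℕ) : ℕ∞) := by
    rw [encard_IccN]; congr 1; omega
  exact le_of_le_of_eq (Set.encard_le_encard hsub) (h1.trans h2)

lemma char1_fwd (hrn : r ≤ n) (hE1 : M₁.E = Set.Icc 1 (2*n)) (hres1 : M₁ ↾ (Set.Icc 1 n) = M)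
    (hpar1 : ∀ i ∈ Set.Icc 1 r, MParallel M₁ i (n+i))
    (hloop1 : ∀ i ∈ Set.Icc (r+1) n, MLoop M₁ (n+i))
    {J : Set ℕ} (hJ : M₁.Indep J) :
    J ⊆ Set.Icc 1 n ∪ (fun i => n+i) '' (Set.Icc 1 r) ∧ Set.InjOn (pr n) J ∧ M.Indep (pr n '' J) :=
  char_fwd hE1 hres1 (Set.Icc_subset_Icc_right hrn) hpar1 (by rw [diff_Icc1]; exact hloop1) hJ

lemma char2_fwd (hrn : r ≤ n) (hE2 : M₂.E = Set.Icc 1 (2*n)) (hres2 : M₂ ↾ (Set.Icc 1 n) = M✶)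
    (hpar2 : ∀ i ∈ Set.Icc (r+1) n, MParallel M₂ i (n+i))
    (hloop2 : ∀ i ∈ Set.Icc 1 r, MLoop M₂ (n+i))
    {J : Set ℕ} (hJ : M₂.Indep J) :
    J ⊆ Set.Icc 1 n ∪ (fun i => n+i) '' (Set.Icc (r+1) n) ∧ Set.InjOn (pr n) J ∧ M✶.Indep (pr n '' J) :=
  char_fwd hE2 hres2 (Set.Icc_subset_Icc_left (by omega)) hpar2
    (by rw [diff_Icc2 hrn]; exact hloop2) hJ

lemma char1_bwd (hrn : r ≤ n) (hE1 : M₁.E = Set.Icc 1 (2*n)) (hres1 : M₁ ↾ (Set.Icc 1 n) = M)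
    (hpar1 : ∀ i ∈ Set.Icc 1 r, MParallel M₁ i (n+i))
    (hloop1 : ∀ i ∈ Set.Icc (r+1) n, MLoop M₁ (n+i))
    {W S : Set ℕ} (hW : M.Indep W) (hS : S ⊆ W ∩ Set.Icc 1 r) :
    M₁.Indep ((W \ S) ∪ (fun i => n+i) '' S) :=
  char_bwd hE1 hres1 (Set.Icc_subset_Icc_right hrn) hpar1 (by rw [diff_Icc1]; exact hloop1) hW hS

lemma char2_bwd (hrn : r ≤ n) (hE2 : M₂.E = Set.Icc 1 (2*n)) (hres2 : M₂ ↾ (Set.Icc 1 n) = M✶)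
    (hpar2 : ∀ i ∈ Set.Icc (r+1) n, MParallel M₂ i (n+i))
    (hloop2 : ∀ i ∈ Set.Icc 1 r, MLoop M₂ (n+i))
    {W S : Set ℕ} (hW : M✶.Indep W) (hS : S ⊆ W ∩ Set.Icc (r+1) n) :
    M₂.Indep ((W \ S) ∪ (fun i => n+i) '' S) :=
  char_bwd hE2 hres2 (Set.Icc_subset_Icc_left (by omega)) hpar2
    (by rw [diff_Icc2 hrn]; exact hloop2) hW hS

lemma Icc_split (hrn : r ≤ n) : Set.Icc 1 r ∪ Set.Icc (r+1) n = Set.Icc 1 n := by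
  ext x; simp only [Set.mem_union, Set.mem_Icc]; omega

lemma Mhat_indep_encard (hrn : r ≤ n) (hME : M.E = Set.Icc 1 n) (hMB : M.IsBase (Set.Icc 1 r))
    (hE1 : M₁.E = Set.Icc 1 (2*n)) (hres1 : M₁ ↾ (Set.Icc 1 n) = M)
    (hpar1 : ∀ i ∈ Set.Icc 1 r, MParallel M₁ i (n+i))
    (hloop1 : ∀ i ∈ Set.Icc (r+1) n, MLoop M₁ (n+i))
    (hE2 : M₂.E = Set.Icc 1 (2*n)) (hres2 : M₂ ↾ (Set.Icc 1 n) = M✶)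
    (hpar2 : ∀ i ∈ Set.Icc (r+1) n, MParallel M₂ i (n+i))
    (hloop2 : ∀ i ∈ Set.Icc 1 r, MLoop M₂ (n+i))
    (hU : ∀ I, Mhat.Indep I ↔ ∃ I₁ I₂, M₁.Indep I₁ ∧ M₂.Indep I₂ ∧ I = I₁ ∪ I₂)
    {I : Set ℕ} (hI : Mhat.Indep I) : I.encard ≤ (n : ℕ∞) := by
  obtain ⟨I₁, I₂, h1, h2, rfl⟩ := (hU _).mp hI
  obtain ⟨-, hinj1, hind1⟩ := char1_fwd hrn hE1 hres1 hpar1 hloop1 h1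
  obtain ⟨-, hinj2, hind2⟩ := char2_fwd hrn hE2 hres2 hpar2 hloop2 h2
  have b1 : I₁.encard ≤ (r : ℕ∞) := by
    rw [← hinj1.encard_image]; exact M_indep_encard hMB hind1
  have b2 : I₂.encard ≤ ((n-r : ℕ) : ℕ∞) := by
    rw [← hinj2.encard_image]; exact Mdual_indep_encard hrn hME hMB hind2
  calc (I₁ ∪ I₂).encard ≤ I₁.encard + I₂.encard := Set.encard_union_le _ _
    _ ≤ (r : ℕ∞) + ((n-r : ℕ) : ℕ∞) := add_le_add b1 b2
    _ = (n : ℕ∞) := by rw [← Nat.cast_add]; congr 1; omega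

lemma Mhat_E_base (hrn : r ≤ n) (hME : M.E = Set.Icc 1 n) (hMB : M.IsBase (Set.Icc 1 r))
    (hE1 : M₁.E = Set.Icc 1 (2*n)) (hres1 : M₁ ↾ (Set.Icc 1 n) = M)
    (hpar1 : ∀ i ∈ Set.Icc 1 r, MParallel M₁ i (n+i))
    (hloop1 : ∀ i ∈ Set.Icc (r+1) n, MLoop M₁ (n+i))
    (hE2 : M₂.E = Set.Icc 1 (2*n)) (hres2 : M₂ ↾ (Set.Icc 1 n) = M✶)
    (hpar2 : ∀ i ∈ Set.Icc (r+1) n, MParallel M₂ i (n+i))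
    (hloop2 : ∀ i ∈ Set.Icc 1 r, MLoop M₂ (n+i))
    (hEh : Mhat.E = Set.Icc 1 (2*n))
    (hU : ∀ I, Mhat.Indep I ↔ ∃ I₁ I₂, M₁.Indep I₁ ∧ M₂.Indep I₂ ∧ I = I₁ ∪ I₂) :
    Mhat.IsBase (Set.Icc 1 n) := by
  have indep1 : M₁.Indep (Set.Icc 1 r) := by
    have h : (M₁ ↾ Set.Icc 1 n).Indep (Set.Icc 1 r) := by rw [hres1]; exact hMB.indep
    exact h.of_restrict
  have indep2 : M₂.Indep (Set.Icc (r+1) n) := by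
    have h : (M₂ ↾ Set.Icc 1 n).Indep (Set.Icc (r+1) n) := by
      rw [hres2]; exact (Mdual_base hME hMB).indep
    exact h.of_restrict
  have hind : Mhat.Indep (Set.Icc 1 n) :=
    (hU _).mpr ⟨_, _, indep1, indep2, (Icc_split hrn).symm⟩
  obtain ⟨B', hB', hsup⟩ := hind.exists_isBase_superset
  have hB'fin : B'.Finite := Set.Finite.subset (Set.finite_Icc 1 (2*n)) (hEh ▸ hB'.subset_ground)
  have hle : B'.encard ≤ (Set.Icc 1 n).encard := by
    rw [encard_IccN]
    have := Mhat_indep_encard hrn hME hMB hE1 hres1 hpar1 hloop1 hE2 hres2 hpar2 hloop2 hU hB'.indep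
    convert this using 2
    omega
  have : Set.Icc 1 n = B' := hB'fin.eq_of_subset_of_encard_le' hsup hle
  exact this ▸ hB'

lemma Mhat_base_encard (hbase : Mhat.IsBase (Set.Icc 1 n)) {Bh : Set ℕ} (hBh : Mhat.IsBase Bh) :
    Bh.encard = (n : ℕ∞) := by
  have := hBh.encard_eq_encard_of_isBase hbase
  rw [this, encard_IccN]
  congr 1

lemma Mhat_base_of_encard (hrn : r ≤ n) (hME : M.E = Set.Icc 1 n) (hMB : M.IsBase (Set.Icc 1 r))
    (hE1 : M₁.E = Set.Icc 1 (2*n)) (hres1 : M₁ ↾ (Set.Icc 1 n) = M)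
    (hpar1 : ∀ i ∈ Set.Icc 1 r, MParallel M₁ i (n+i))
    (hloop1 : ∀ i ∈ Set.Icc (r+1) n, MLoop M₁ (n+i))
    (hE2 : M₂.E = Set.Icc 1 (2*n)) (hres2 : M₂ ↾ (Set.Icc 1 n) = M✶)
    (hpar2 : ∀ i ∈ Set.Icc (r+1) n, MParallel M₂ i (n+i))
    (hloop2 : ∀ i ∈ Set.Icc 1 r, MLoop M₂ (n+i))
    (hEh : Mhat.E = Set.Icc 1 (2*n))
    (hU : ∀ I, Mhat.Indep I ↔ ∃ I₁ I₂, M₁.Indep I₁ ∧ M₂.Indep I₂ ∧ I = I₁ ∪ I₂)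
    {I : Set ℕ} (hI : Mhat.Indep I) (hcard : I.encard = (n : ℕ∞)) : Mhat.IsBase I := by
  obtain ⟨B', hB', hsup⟩ := hI.exists_isBase_superset
  have hB'fin : B'.Finite := Set.Finite.subset (Set.finite_Icc 1 (2*n)) (hEh ▸ hB'.subset_ground)
  have hle : B'.encard ≤ I.encard := by
    rw [hcard,
      Mhat_base_encard (Mhat_E_base hrn hME hMB hE1 hres1 hpar1 hloop1 hE2 hres2 hpar2 hloop2 hEh hU) hB']
  have : I = B' := hB'fin.eq_of_subset_of_encard_le' hsup hle
  exact this ▸ hB'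

lemma enc_nc {s : Set ℕ} (hs : s.Finite) : s.encard = (s.ncard : ℕ∞) := by
  rw [Set.ncard_def, ← hs.encard_eq_coe]

lemma sh_Icc {n a b : ℕ} : (fun i => n+i) '' (Set.Icc a b) = Set.Icc (n+a) (n+b) := by
  ext x
  simp only [Set.mem_image, Set.mem_Icc]
  constructor
  · rintro ⟨i, ⟨h1, h2⟩, rfl⟩; omega
  · intro ⟨h1, h2⟩; exact ⟨x - n, ⟨by omega, by omega⟩, by omega⟩

lemma M_base_encard (hMB : M.IsBase (Set.Icc 1 r)) {W : Set ℕ} (hW : M.IsBase W) :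
    W.encard = (r : ℕ∞) := by
  rw [hW.encard_eq_encard_of_isBase hMB, encard_IccN]
  congr 1

lemma M_base_of_encard (hME : M.E = Set.Icc 1 n) (hMB : M.IsBase (Set.Icc 1 r))
    {I : Set ℕ} (hI : M.Indep I) (hcard : I.encard = (r : ℕ∞)) : M.IsBase I := by
  obtain ⟨B', hB', hsup⟩ := hI.exists_isBase_superset
  have hB'fin : B'.Finite := Set.Finite.subset (Set.finite_Icc 1 n) (hME ▸ hB'.subset_ground)
  have hle : B'.encard ≤ I.encard := by rw [hcard, M_base_encard hMB hB']
  have : I = B' := hB'fin.eq_of_subset_of_encard_le' hsup hle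
  exact this ▸ hB'

lemma factS (hrn : r ≤ n) (hME : M.E = Set.Icc 1 n) (hMB : M.IsBase (Set.Icc 1 r))
    (hE1 : M₁.E = Set.Icc 1 (2*n)) (hres1 : M₁ ↾ (Set.Icc 1 n) = M)
    (hpar1 : ∀ i ∈ Set.Icc 1 r, MParallel M₁ i (n+i))
    (hloop1 : ∀ i ∈ Set.Icc (r+1) n, MLoop M₁ (n+i))
    (hE2 : M₂.E = Set.Icc 1 (2*n)) (hres2 : M₂ ↾ (Set.Icc 1 n) = M✶)
    (hpar2 : ∀ i ∈ Set.Icc (r+1) n, MParallel M₂ i (n+i))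
    (hloop2 : ∀ i ∈ Set.Icc 1 r, MLoop M₂ (n+i))
    (hEh : Mhat.E = Set.Icc 1 (2*n))
    (hU : ∀ I, Mhat.Indep I ↔ ∃ I₁ I₂, M₁.Indep I₁ ∧ M₂.Indep I₂ ∧ I = I₁ ∪ I₂)
    {Z : Set ℕ} (hBZ : Set.Icc (n+r+1) (2*n) ⊆ Z) :
    Spn Mhat Z ↔ ∃ W, M.IsBase W ∧ ∀ i ∈ W, i ∈ Z ∨ (i ∈ Set.Icc 1 r ∧ n+i ∈ Z) := by
  constructor
  · rintro ⟨Bh, hBh, hBhZ⟩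
    obtain ⟨I₁, I₂, h1, h2, hBheq⟩ := (hU _).mp hBh.indep
    obtain ⟨hsub1, hinj1, hind1⟩ := char1_fwd hrn hE1 hres1 hpar1 hloop1 h1
    obtain ⟨hsub2, hinj2, hind2⟩ := char2_fwd hrn hE2 hres2 hpar2 hloop2 h2
    set W₁ := pr n '' I₁ with hW₁
    set W₂ := pr n '' I₂ with hW₂
    -- cardinality bookkeeping
    have hI1fin : I₁.Finite := Set.Finite.subset (Set.finite_Icc 1 (2*n)) (hE1 ▸ h1.subset_ground)
    have hI2fin : I₂.Finite := Set.Finite.subset (Set.finite_Icc 1 (2*n)) (hE2 ▸ h2.subset_ground)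
    have hW1fin : W₁.Finite := hI1fin.image _
    have hW2fin : W₂.Finite := hI2fin.image _
    have hb1 : W₁.encard ≤ (r : ℕ∞) := M_indep_encard hMB hind1
    have hb2 : W₂.encard ≤ ((n-r : ℕ) : ℕ∞) := Mdual_indep_encard hrn hME hMB hind2
    have he1 : I₁.encard = W₁.encard := (hinj1.encard_image).symm
    have he2 : I₂.encard = W₂.encard := (hinj2.encard_image).symm
    have hBhn : (I₁ ∪ I₂).encard = (n : ℕ∞) := by
      rw [← hBheq]
      exact Mhat_base_encard (Mhat_E_base hrn hME hMB hE1 hres1 hpar1 hloop1 hE2 hres2 hpar2 hloop2 hEh hU) hBh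
    have hsum : (n : ℕ∞) ≤ W₁.encard + W₂.encard := by
      rw [← he1, ← he2, ← hBhn]
      exact Set.encard_union_le _ _
    have hW1r : W₁.encard = (r : ℕ∞) := by
      rw [enc_nc hW1fin] at hb1 hsum ⊢
      rw [enc_nc hW2fin] at hb2 hsum
      rw [← Nat.cast_add, Nat.cast_le] at hsum
      rw [Nat.cast_le] at hb1 hb2
      rw [Nat.cast_inj]
      omega
    have hW1base : M.IsBase W₁ := M_base_of_encard hME hMB hind1 hW1r
    refine ⟨W₁, hW1base, ?_⟩
    rintro i ⟨y, hyI₁, rfl⟩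
    have hyZ : y ∈ Z := hBhZ (hBheq ▸ Or.inl hyI₁)
    rcases hsub1 hyI₁ with hy | ⟨j, hj, rfl⟩
    · left
      have : pr n y = y := by unfold pr; rw [if_neg (by simp only [Set.mem_Icc] at hy; omega)]
      rwa [this]
    · right
      have hj' : 1 ≤ j ∧ j ≤ r := by simpa using hj
      have : pr n (n + j) = j := by unfold pr; rw [if_pos (by omega)]; omega
      rw [this]
      exact ⟨hj, by rwa [← this] at hyZ ▸ hyZ⟩
  · rintro ⟨W, hW, hcond⟩
    have hWE : W ⊆ Set.Icc 1 n := hME ▸ hW.subset_ground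
    set S : Set ℕ := {i ∈ W | i ∉ Z} with hSdef
    have hSsub : S ⊆ W ∩ Set.Icc 1 r := by
      rintro i ⟨hiW, hiZ⟩
      rcases hcond i hiW with h | ⟨h1, h2⟩
      · exact absurd h hiZ
      · exact ⟨hiW, h1⟩
    set I₁ := (W \ S) ∪ (fun i => n+i) '' S with hI₁def
    have hI₁ind : M₁.Indep I₁ := char1_bwd hrn hE1 hres1 hpar1 hloop1 hW.indep hSsub
    set I₂ := (fun i => n+i) '' (Set.Icc (r+1) n) with hI₂def
    have hI₂ind : M₂.Indep I₂ := by
      have h := char2_bwd hrn hE2 hres2 hpar2 hloop2 (Mdual_base hME hMB).indep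
        (Set.subset_inter (subset_refl _) (subset_refl _))
      rwa [Set.diff_self, Set.empty_union] at h
    have hI₂Icc : I₂ = Set.Icc (n+r+1) (2*n) := by
      rw [hI₂def, sh_Icc]
      ext x
      simp only [Set.mem_Icc]
      omega
    have hI₁Z : I₁ ⊆ Z := by
      rintro x (⟨hxW, hxS⟩ | ⟨i, hiS, rfl⟩)
      · by_contra hxZ
        exact hxS ⟨hxW, hxZ⟩
      · rcases hcond i (hSsub hiS).1 with h | ⟨-, h2⟩
        · exact absurd h hiS.2
        · exact h2
    have hI₂Z : I₂ ⊆ Z := hI₂Icc ▸ hBZ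
    have hind : Mhat.Indep (I₁ ∪ I₂) := (hU _).mpr ⟨I₁, I₂, hI₁ind, hI₂ind, rfl⟩
    -- cardinality: |I₁| = r, |I₂| = n - r
    have hShigh : (fun i => n+i) '' S ⊆ Set.Icc (n+1) (n+r) := by
      rintro x ⟨i, hiS, rfl⟩
      have := (hSsub hiS).2
      simp only [Set.mem_Icc] at this ⊢
      omega
    have hdisj1 : Disjoint (W \ S) ((fun i => n+i) '' S) := by
      rw [Set.disjoint_left]
      rintro x ⟨hxW, -⟩ hx2
      have h1 := hWE hxW
      have h2 := hShigh hx2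
      simp only [Set.mem_Icc] at h1 h2
      omega
    have hencI₁ : I₁.encard = W.encard := by
      rw [hI₁def, Set.encard_union_eq hdisj1,
        Function.Injective.encard_image (fun a b h => Nat.add_left_cancel h : Function.Injective (fun i => n+i)),
        Set.encard_diff_add_encard_of_subset (hSsub.trans Set.inter_subset_left)]
    have hencI₂ : I₂.encard = ((n - r : ℕ) : ℕ∞) := by
      rw [hI₂Icc, encard_IccN]
      congr 1
      omega
    have hdisj12 : Disjoint I₁ I₂ := by
      rw [Set.disjoint_left]
      rintro x hx1 hx2
      rw [hI₂Icc] at hx2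
      have h2 : n+r+1 ≤ x := (Set.mem_Icc.mp hx2).1
      rcases hx1 with ⟨hxW, -⟩ | hx
      · have := hWE hxW
        simp only [Set.mem_Icc] at this
        omega
      · have := hShigh hx
        simp only [Set.mem_Icc] at this
        omega
    have hencU : (I₁ ∪ I₂).encard = (n : ℕ∞) := by
      rw [Set.encard_union_eq hdisj12, hencI₁, M_base_encard hMB hW, hencI₂, ← Nat.cast_add]
      congr 1
      omega
    exact ⟨I₁ ∪ I₂, Mhat_base_of_encard hrn hME hMB hE1 hres1 hpar1 hloop1 hE2 hres2 hpar2 hloop2 hEh hU hind hencU,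
      Set.union_subset hI₁Z hI₂Z⟩

/-- extension of a covector support of `M` to one of `Mhat` -/
def extC (n r : ℕ) (Z : Set ℕ) : Set ℕ := Z ∪ (fun i => n+i) '' (Z ∩ Set.Icc 1 r)

lemma cocircuitA (hrn : r ≤ n) (hME : M.E = Set.Icc 1 n) (hMB : M.IsBase (Set.Icc 1 r))
    (hE1 : M₁.E = Set.Icc 1 (2*n)) (hres1 : M₁ ↾ (Set.Icc 1 n) = M)
    (hpar1 : ∀ i ∈ Set.Icc 1 r, MParallel M₁ i (n+i))
    (hloop1 : ∀ i ∈ Set.Icc (r+1) n, MLoop M₁ (n+i))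
    (hE2 : M₂.E = Set.Icc 1 (2*n)) (hres2 : M₂ ↾ (Set.Icc 1 n) = M✶)
    (hpar2 : ∀ i ∈ Set.Icc (r+1) n, MParallel M₂ i (n+i))
    (hloop2 : ∀ i ∈ Set.Icc 1 r, MLoop M₂ (n+i))
    (hEh : Mhat.E = Set.Icc 1 (2*n))
    (hU : ∀ I, Mhat.Indep I ↔ ∃ I₁ I₂, M₁.Indep I₁ ∧ M₂.Indep I₂ ∧ I = I₁ ∪ I₂)
    {D : Set ℕ} (hD : Cocircuit Mhat D) (hDB : D ∩ Set.Icc (n+r+1) (2*n) = ∅) :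
    Cocircuit M (D ∩ Set.Icc 1 n) ∧ D = extC n r (D ∩ Set.Icc 1 n) := by
  rw [cocircuit_iff_spn] at hD
  obtain ⟨hDE, hnspn, hmin⟩ := hD
  rw [hEh] at hDE hnspn hmin
  have hDnB : ∀ x ∈ D, x ≤ n + r := by
    intro x hx
    by_contra h
    have hx2 := hDE hx
    simp only [Set.mem_Icc] at hx2
    have : x ∈ D ∩ Set.Icc (n+r+1) (2*n) := ⟨hx, by simp only [Set.mem_Icc]; omega⟩
    rw [hDB] at this
    exact this
  have hBZ : ∀ {T : Set ℕ}, T ⊆ D → Set.Icc (n+r+1) (2*n) ⊆ Set.Icc 1 (2*n) \ T := by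
    intro T hT x hx
    simp only [Set.mem_Icc] at hx
    refine ⟨by simp only [Set.mem_Icc]; omega, fun hxT => ?_⟩
    have := hDnB x (hT hxT)
    omega
  -- step 1: symmetry of D across the parallel pairs
  have hab : ∀ i, 1 ≤ i → i ≤ r → i ∈ D → n + i ∈ D := by
    intro i hi1 hir hiD
    by_contra hniD
    apply hnspn
    obtain ⟨W, hW, hcond⟩ := (factS hrn hME hMB hE1 hres1 hpar1 hloop1 hE2 hres2 hpar2 hloop2 hEh hU (hBZ (Set.diff_subset))).mp
      (hmin i hiD)
    refine (factS hrn hME hMB hE1 hres1 hpar1 hloop1 hE2 hres2 hpar2 hloop2 hEh hU (hBZ (subset_refl _))).mpr ⟨W, hW, ?_⟩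
    intro j hjW
    have hjn : j ∈ Set.Icc 1 n := (hME ▸ hW.subset_ground) hjW
    simp only [Set.mem_Icc] at hjn
    rcases hcond j hjW with ⟨hj2, hjD⟩ | ⟨hjr, hj2, hjD⟩
    · rcases eq_or_ne j i with rfl | hne
      · right
        refine ⟨by simp only [Set.mem_Icc]; omega, by simp only [Set.mem_Icc]; omega, hniD⟩
      · left
        exact ⟨hj2, fun hjD' => hjD ⟨hjD', by simpa using hne⟩⟩
    · right
      have hjr' : 1 ≤ j ∧ j ≤ r := by simpa using hjr
      refine ⟨hjr, hj2, fun hjD' => hjD ⟨hjD', by simp only [Set.mem_singleton_iff]; omega⟩⟩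
  have hba : ∀ x ∈ D, n < x → x - n ∈ D ∧ 1 ≤ x - n ∧ x - n ≤ r := by
    intro x hxD hxn
    have hx2 := hDE hxD
    simp only [Set.mem_Icc] at hx2
    have hxr := hDnB x hxD
    set i := x - n with hidef
    have hxi : x = n + i := by omega
    have hir : 1 ≤ i ∧ i ≤ r := by omega
    refine ⟨?_, hir.1, hir.2⟩
    by_contra hiD
    apply hnspn
    obtain ⟨W, hW, hcond⟩ := (factS hrn hME hMB hE1 hres1 hpar1 hloop1 hE2 hres2 hpar2 hloop2 hEh hU (hBZ (Set.diff_subset))).mp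
      (hmin x hxD)
    refine (factS hrn hME hMB hE1 hres1 hpar1 hloop1 hE2 hres2 hpar2 hloop2 hEh hU (hBZ (subset_refl _))).mpr ⟨W, hW, ?_⟩
    intro j hjW
    have hjn : j ∈ Set.Icc 1 n := (hME ▸ hW.subset_ground) hjW
    simp only [Set.mem_Icc] at hjn
    rcases hcond j hjW with ⟨hj2, hjD⟩ | ⟨hjr, hj2, hjD⟩
    · left
      exact ⟨hj2, fun hjD' => hjD ⟨hjD', by simp only [Set.mem_singleton_iff]; omega⟩⟩
    · have hjr' : 1 ≤ j ∧ j ≤ r := by simpa using hjr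
      rcases eq_or_ne j i with rfl | hne
      · left
        refine ⟨by simp only [Set.mem_Icc]; omega, hiD⟩
      · right
        refine ⟨hjr, hj2, fun hjD' => hjD ⟨hjD', by simp only [Set.mem_singleton_iff]; omega⟩⟩
  -- the structural equation
  have hDeq : D = extC n r (D ∩ Set.Icc 1 n) := by
    ext x
    constructor
    · intro hxD
      have hx2 := hDE hxD
      simp only [Set.mem_Icc] at hx2
      rcases le_or_gt x n with h | h
      · exact Or.inl ⟨hxD, by simp only [Set.mem_Icc]; omega⟩
      · obtain ⟨hiD, hi1, hir⟩ := hba x hxD h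
        exact Or.inr ⟨x - n, ⟨⟨hiD, by simp only [Set.mem_Icc]; omega⟩,
          by simp only [Set.mem_Icc]; omega⟩, by show n + (x - n) = x; omega⟩
    · rintro (⟨hxD, -⟩ | ⟨i, ⟨⟨hiD, -⟩, hir⟩, rfl⟩)
      · exact hxD
      · have := Set.mem_Icc.mp hir
        exact hab i this.1 this.2 hiD
  refine ⟨?_, hDeq⟩
  rw [cocircuit_iff_spn, hME]
  refine ⟨Set.inter_subset_right, ?_, ?_⟩
  · rintro ⟨W, hW, hWsub⟩
    apply hnspn
    refine (factS hrn hME hMB hE1 hres1 hpar1 hloop1 hE2 hres2 hpar2 hloop2 hEh hU (hBZ (subset_refl _))).mpr ⟨W, hW, ?_⟩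
    intro j hjW
    have hj := hWsub hjW
    simp only [Set.mem_diff, Set.mem_Icc] at hj
    left
    refine ⟨by simp only [Set.mem_Icc]; omega, fun hjD => hj.2 ⟨hjD, by simp only [Set.mem_Icc]; omega⟩⟩
  · rintro d ⟨hdD, hdn⟩
    simp only [Set.mem_Icc] at hdn
    obtain ⟨W, hW, hcond⟩ := (factS hrn hME hMB hE1 hres1 hpar1 hloop1 hE2 hres2 hpar2 hloop2 hEh hU (hBZ (Set.diff_subset))).mp
      (hmin d hdD)
    refine ⟨W, hW, ?_⟩
    intro j hjW
    have hjn : j ∈ Set.Icc 1 n := (hME ▸ hW.subset_ground) hjW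
    simp only [Set.mem_Icc] at hjn
    refine ⟨by simp only [Set.mem_Icc]; omega, ?_⟩
    rintro ⟨⟨hjD, -⟩, hjd⟩
    simp only [Set.mem_singleton_iff] at hjd
    rcases hcond j hjW with ⟨-, hjD'⟩ | ⟨hjr, -, hjD'⟩
    · exact hjD' ⟨hjD, by simp only [Set.mem_singleton_iff]; exact hjd⟩
    · have hjr' : 1 ≤ j ∧ j ≤ r := by simpa using hjr
      exact hjD' ⟨hab j hjr'.1 hjr'.2 hjD, by simp only [Set.mem_singleton_iff]; omega⟩

lemma cocircuitB (hrn : r ≤ n) (hME : M.E = Set.Icc 1 n) (hMB : M.IsBase (Set.Icc 1 r))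
    (hE1 : M₁.E = Set.Icc 1 (2*n)) (hres1 : M₁ ↾ (Set.Icc 1 n) = M)
    (hpar1 : ∀ i ∈ Set.Icc 1 r, MParallel M₁ i (n+i))
    (hloop1 : ∀ i ∈ Set.Icc (r+1) n, MLoop M₁ (n+i))
    (hE2 : M₂.E = Set.Icc 1 (2*n)) (hres2 : M₂ ↾ (Set.Icc 1 n) = M✶)
    (hpar2 : ∀ i ∈ Set.Icc (r+1) n, MParallel M₂ i (n+i))
    (hloop2 : ∀ i ∈ Set.Icc 1 r, MLoop M₂ (n+i))
    (hEh : Mhat.E = Set.Icc 1 (2*n))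
    (hU : ∀ I, Mhat.Indep I ↔ ∃ I₁ I₂, M₁.Indep I₁ ∧ M₂.Indep I₂ ∧ I = I₁ ∪ I₂)
    {D : Set ℕ} (hD : Cocircuit M D) : Cocircuit Mhat (extC n r D) := by
  rw [cocircuit_iff_spn] at hD ⊢
  obtain ⟨hDE, hnspn, hmin⟩ := hD
  rw [hME] at hDE hnspn hmin
  rw [hEh]
  have hDn : ∀ x ∈ D, 1 ≤ x ∧ x ≤ n := by
    intro x hx
    have := hDE hx
    simpa using this
  have hext : ∀ x, x ∈ extC n r D ↔ (x ∈ D ∨ (n < x ∧ x - n ∈ D ∧ 1 ≤ x - n ∧ x - n ≤ r)) := by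
    intro x
    constructor
    · rintro (hx | ⟨i, ⟨hiD, hir⟩, rfl⟩)
      · exact Or.inl hx
      · simp only [Set.mem_Icc] at hir
        right
        constructor
        · show n < n + i; omega
        · have : n + i - n = i := by omega
          rw [show (fun i => n+i) i = n + i from rfl, this]
          exact ⟨hiD, hir.1, hir.2⟩
    · rintro (hx | ⟨h1, h2, h3, h4⟩)
      · exact Or.inl hx
      · exact Or.inr ⟨x - n, ⟨h2, by simp only [Set.mem_Icc]; omega⟩, by show n + (x-n) = x; omega⟩
  have hBZ : ∀ {T : Set ℕ}, T ⊆ extC n r D →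
      Set.Icc (n+r+1) (2*n) ⊆ Set.Icc 1 (2*n) \ T := by
    intro T hT x hx
    simp only [Set.mem_Icc] at hx
    refine ⟨by simp only [Set.mem_Icc]; omega, fun hxT => ?_⟩
    rcases (hext x).mp (hT hxT) with h | ⟨h1, h2, h3, h4⟩
    · have := hDn x h; omega
    · omega
  refine ⟨?_, ?_, ?_⟩
  · intro x hx
    rcases (hext x).mp hx with h | ⟨h1, h2, h3, h4⟩
    · have := hDn x h
      simp only [Set.mem_Icc]
      omega
    · simp only [Set.mem_Icc]
      omega
  · rintro hspn
    obtain ⟨W, hW, hcond⟩ := (factS hrn hME hMB hE1 hres1 hpar1 hloop1 hE2 hres2 hpar2 hloop2 hEh hU (hBZ (subset_refl _))).mp hspn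
    apply hnspn
    refine ⟨W, hW, ?_⟩
    intro j hjW
    have hjn : j ∈ Set.Icc 1 n := (hME ▸ hW.subset_ground) hjW
    simp only [Set.mem_Icc] at hjn
    refine ⟨by simp only [Set.mem_Icc]; omega, fun hjD => ?_⟩
    rcases hcond j hjW with ⟨-, hjZ⟩ | ⟨hjr, -, hjZ⟩
    · exact hjZ (Or.inl hjD)
    · have hjr' : 1 ≤ j ∧ j ≤ r := by simpa using hjr
      exact hjZ ((hext (n+j)).mpr (Or.inr ⟨by omega, by
        have : n + j - n = j := by omega
        rw [this]; exact ⟨hjD, by omega, by omega⟩⟩))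
  · intro d hd
    have hd0 : ∃ d₀ ∈ D, (d = d₀ ∨ (d = n + d₀ ∧ 1 ≤ d₀ ∧ d₀ ≤ r)) := by
      rcases (hext d).mp hd with h | ⟨h1, h2, h3, h4⟩
      · exact ⟨d, h, Or.inl rfl⟩
      · exact ⟨d - n, h2, Or.inr ⟨by omega, h3, h4⟩⟩
    obtain ⟨d₀, hd₀D, hdd₀⟩ := hd0
    have hd₀n := hDn d₀ hd₀D
    obtain ⟨W, hW, hWsub⟩ := hmin d₀ hd₀D
    refine (factS hrn hME hMB hE1 hres1 hpar1 hloop1 hE2 hres2 hpar2 hloop2 hEh hU (hBZ (Set.diff_subset))).mpr ⟨W, hW, ?_⟩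
    intro j hjW
    have hj := hWsub hjW
    simp only [Set.mem_diff, Set.mem_Icc, Set.mem_singleton_iff] at hj
    obtain ⟨⟨hj1, hj2⟩, hjD⟩ := hj
    -- hjD : ¬(j ∈ D ∧ j ≠ d₀)
    by_cases hjd₀ : j ∈ D
    · -- then j = d₀
      have hjeq : j = d₀ := by
        by_contra hne
        exact hjD ⟨hjd₀, hne⟩
      subst hjeq
      rcases hdd₀ with rfl | ⟨rfl, hr1, hr2⟩
      · -- d = j : use the first disjunct
        left
        refine ⟨by simp only [Set.mem_Icc]; omega, ?_⟩
        rintro ⟨-, hne⟩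
        simp only [Set.mem_singleton_iff] at hne
        exact hne trivial
      · -- d = n + j : use the second disjunct
        right
        refine ⟨by simp only [Set.mem_Icc]; omega, by simp only [Set.mem_Icc]; omega, ?_⟩
        rintro ⟨-, hne⟩
        simp only [Set.mem_singleton_iff] at hne
        exact hne trivial
    · -- j ∉ D : j ∉ extC D since j ≤ n
      left
      refine ⟨by simp only [Set.mem_Icc]; omega, ?_⟩
      rintro ⟨hjext, -⟩
      rcases (hext j).mp hjext with h | ⟨h1, -⟩
      · exact hjd₀ h
      · omega

lemma extC_mono {n r : ℕ} {Z₁ Z₂ : Set ℕ} (h : Z₁ ⊆ Z₂) : extC n r Z₁ ⊆ extC n r Z₂ :=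
  Set.union_subset_union h (Set.image_mono (Set.inter_subset_inter_left _ h))

lemma extC_inter_E {n r : ℕ} {Z : Set ℕ} (hZ : Z ⊆ Set.Icc 1 n) :
    extC n r Z ∩ Set.Icc 1 n = Z := by
  ext x
  simp only [extC, Set.mem_inter_iff, Set.mem_union, Set.mem_image, Set.mem_inter_iff,
    Set.mem_Icc]
  constructor
  · rintro ⟨hx | ⟨i, ⟨hiZ, hi1, hir⟩, rfl⟩, hx1, hx2⟩
    · exact hx
    · exfalso
      have : n + i ≤ n := hx2
      omega
  · intro hx
    have := hZ hx
    simp only [Set.mem_Icc] at this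
    exact ⟨Or.inl hx, this.1, this.2⟩

lemma unionCocirc_subset_ground {M : Matroid γ} {Z : Set γ} (h : UnionOfCocircuits M Z) :
    Z ⊆ M.E := by
  obtain ⟨S, hS, rfl⟩ := h
  exact Set.sUnion_subset fun D hD => (hS D hD).1

lemma rep_hat (hrn : r ≤ n) (hME : M.E = Set.Icc 1 n) (hMB : M.IsBase (Set.Icc 1 r))
    (hE1 : M₁.E = Set.Icc 1 (2*n)) (hres1 : M₁ ↾ (Set.Icc 1 n) = M)
    (hpar1 : ∀ i ∈ Set.Icc 1 r, MParallel M₁ i (n+i))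
    (hloop1 : ∀ i ∈ Set.Icc (r+1) n, MLoop M₁ (n+i))
    (hE2 : M₂.E = Set.Icc 1 (2*n)) (hres2 : M₂ ↾ (Set.Icc 1 n) = M✶)
    (hpar2 : ∀ i ∈ Set.Icc (r+1) n, MParallel M₂ i (n+i))
    (hloop2 : ∀ i ∈ Set.Icc 1 r, MLoop M₂ (n+i))
    (hEh : Mhat.E = Set.Icc 1 (2*n))
    (hU : ∀ I, Mhat.Indep I ↔ ∃ I₁ I₂, M₁.Indep I₁ ∧ M₂.Indep I₂ ∧ I = I₁ ∪ I₂)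
    {Y : Set ℕ} (hY : UnionOfCocircuits Mhat Y) (hYB : Y ∩ Set.Icc (n+r+1) (2*n) = ∅) :
    Y = extC n r (Y ∩ Set.Icc 1 n) ∧ UnionOfCocircuits M (Y ∩ Set.Icc 1 n) := by
  obtain ⟨S, hS, rfl⟩ := hY
  have hDB : ∀ D ∈ S, D ∩ Set.Icc (n+r+1) (2*n) = ∅ := by
    intro D hD
    have hsub : D ⊆ ⋃₀ S := Set.subset_sUnion_of_mem hD
    rw [← Set.subset_empty_iff, ← hYB]
    exact Set.inter_subset_inter_left _ hsub
  have hA := fun D hD => cocircuitA hrn hME hMB hE1 hres1 hpar1 hloop1 hE2 hres2 hpar2 hloop2 hEh hU (hS D hD) (hDB D hD)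
  constructor
  · ext x
    constructor
    · rintro ⟨D, hDS, hxD⟩
      have hDeq := (hA D hDS).2
      rw [hDeq] at hxD
      rcases hxD with hx | ⟨i, ⟨⟨hiD, hiE⟩, hir⟩, rfl⟩
      · exact Or.inl ⟨⟨D, hDS, hx.1⟩, hx.2⟩
      · exact Or.inr ⟨i, ⟨⟨⟨D, hDS, hiD⟩, hiE⟩, hir⟩, rfl⟩
    · rintro (⟨hx, -⟩ | ⟨i, ⟨⟨⟨D, hDS, hiD⟩, hiE⟩, hir⟩, rfl⟩)
      · exact hx
      · refine ⟨D, hDS, ?_⟩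
        rw [(hA D hDS).2]
        exact Or.inr ⟨i, ⟨⟨hiD, hiE⟩, hir⟩, rfl⟩
  · refine ⟨(fun D => D ∩ Set.Icc 1 n) '' S, ?_, ?_⟩
    · rintro D' ⟨D, hDS, rfl⟩
      exact (hA D hDS).1
    · ext x
      simp only [Set.mem_inter_iff, Set.mem_sUnion, Set.mem_image]
      constructor
      · rintro ⟨⟨D, hDS, hxD⟩, hxE⟩
        exact ⟨D ∩ Set.Icc 1 n, ⟨D, hDS, rfl⟩, hxD, hxE⟩
      · rintro ⟨D', ⟨D, hDS, rfl⟩, hxD, hxE⟩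
        exact ⟨⟨D, hDS, hxD⟩, hxE⟩

lemma rep_ext (hrn : r ≤ n) (hME : M.E = Set.Icc 1 n) (hMB : M.IsBase (Set.Icc 1 r))
    (hE1 : M₁.E = Set.Icc 1 (2*n)) (hres1 : M₁ ↾ (Set.Icc 1 n) = M)
    (hpar1 : ∀ i ∈ Set.Icc 1 r, MParallel M₁ i (n+i))
    (hloop1 : ∀ i ∈ Set.Icc (r+1) n, MLoop M₁ (n+i))
    (hE2 : M₂.E = Set.Icc 1 (2*n)) (hres2 : M₂ ↾ (Set.Icc 1 n) = M✶)
    (hpar2 : ∀ i ∈ Set.Icc (r+1) n, MParallel M₂ i (n+i))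
    (hloop2 : ∀ i ∈ Set.Icc 1 r, MLoop M₂ (n+i))
    (hEh : Mhat.E = Set.Icc 1 (2*n))
    (hU : ∀ I, Mhat.Indep I ↔ ∃ I₁ I₂, M₁.Indep I₁ ∧ M₂.Indep I₂ ∧ I = I₁ ∪ I₂)
    {Z : Set ℕ} (hZ : UnionOfCocircuits M Z) : UnionOfCocircuits Mhat (extC n r Z) := by
  obtain ⟨S, hS, rfl⟩ := hZ
  refine ⟨extC n r '' S, ?_, ?_⟩
  · rintro D' ⟨D, hDS, rfl⟩
    exact cocircuitB hrn hME hMB hE1 hres1 hpar1 hloop1 hE2 hres2 hpar2 hloop2 hEh hU (hS D hDS)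
  · ext x
    simp only [extC, Set.mem_union, Set.mem_image, Set.mem_inter_iff, Set.mem_sUnion]
    constructor
    · rintro (⟨D, hDS, hxD⟩ | ⟨i, ⟨⟨D, hDS, hiD⟩, hir⟩, rfl⟩)
      · exact ⟨extC n r D, ⟨D, hDS, rfl⟩, Or.inl hxD⟩
      · exact ⟨extC n r D, ⟨D, hDS, rfl⟩, Or.inr ⟨i, ⟨hiD, hir⟩, rfl⟩⟩
    · rintro ⟨D', ⟨D, hDS, rfl⟩, hxD'⟩
      rcases hxD' with hx | ⟨i, ⟨hiD, hir⟩, rfl⟩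
      · exact Or.inl ⟨D, hDS, hx⟩
      · exact Or.inr ⟨i, ⟨⟨D, hDS, hiD⟩, hir⟩, rfl⟩


end BZ

/-- if `X` is a union of cocircuits of `M̂` with `X ∩ B = ∅`,
then its rank in the lattice of unions of cocircuits of `M̂` equals the lattice
rank of `X ∩ E` in the corresponding lattice of `M`. -/
theorem bz_lattice_rank_eq
    (n r : ℕ) (hrn : r ≤ n) (M M₁ M₂ Mhat : Matroid ℕ)
    (hME : M.E = Set.Icc 1 n) (hMB : M.IsBase (Set.Icc 1 r))
    (hE1 : M₁.E = Set.Icc 1 (2*n)) (hres1 : M₁ ↾ (Set.Icc 1 n) = M)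
    (hpar1 : ∀ i ∈ Set.Icc 1 r, MParallel M₁ i (n+i))
    (hloop1 : ∀ i ∈ Set.Icc (r+1) n, MLoop M₁ (n+i))
    (hE2 : M₂.E = Set.Icc 1 (2*n)) (hres2 : M₂ ↾ (Set.Icc 1 n) = M✶)
    (hpar2 : ∀ i ∈ Set.Icc (r+1) n, MParallel M₂ i (n+i))
    (hloop2 : ∀ i ∈ Set.Icc 1 r, MLoop M₂ (n+i))
    (hEh : Mhat.E = Set.Icc 1 (2*n))
    (hU : ∀ I, Mhat.Indep I ↔ ∃ I₁ I₂, M₁.Indep I₁ ∧ M₂.Indep I₂ ∧ I = I₁ ∪ I₂)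
    (X : Set ℕ) (hX : UnionOfCocircuits Mhat X)
    (hXB : X ∩ Set.Icc (n+r+1) (2*n) = ∅) :
    latticeRk Mhat X = latticeRk M (X ∩ Set.Icc 1 n) := by
  obtain ⟨hXeq, -⟩ := rep_hat hrn hME hMB hE1 hres1 hpar1 hloop1 hE2 hres2 hpar2 hloop2 hEh hU hX hXB
  unfold latticeRk
  apply congrArg
  ext k
  simp only [Set.mem_setOf_eq]
  constructor
  · rintro ⟨c, hmono, hcoc, h0, hlast⟩
    refine ⟨fun i => c i ∩ Set.Icc 1 n, ?_, ?_, ?_, ?_⟩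
    · -- strict monotonicity
      have hrep : ∀ i, c i = extC n r (c i ∩ Set.Icc 1 n) := by
        intro i
        have hsub : c i ⊆ X := hlast ▸ hmono.monotone (Fin.le_last i)
        have hciB : c i ∩ Set.Icc (n+r+1) (2*n) = ∅ := by
          rw [← Set.subset_empty_iff, ← hXB]
          exact Set.inter_subset_inter_left _ hsub
        exact (rep_hat hrn hME hMB hE1 hres1 hpar1 hloop1 hE2 hres2 hpar2 hloop2 hEh hU (hcoc i) hciB).1
      intro i j hij
      show (c i ∩ Set.Icc 1 n) < (c j ∩ Set.Icc 1 n)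
      have hcij := hmono hij
      refine lt_of_le_of_ne (Set.inter_subset_inter_left _ hcij.le) (fun h => hcij.ne ?_)
      rw [hrep i, hrep j, h]
    · intro i
      have hsub : c i ⊆ X := hlast ▸ hmono.monotone (Fin.le_last i)
      have hciB : c i ∩ Set.Icc (n+r+1) (2*n) = ∅ := by
        rw [← Set.subset_empty_iff, ← hXB]
        exact Set.inter_subset_inter_left _ hsub
      exact (rep_hat hrn hME hMB hE1 hres1 hpar1 hloop1 hE2 hres2 hpar2 hloop2 hEh hU (hcoc i) hciB).2
    · show c 0 ∩ Set.Icc 1 n = ∅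
      rw [h0, Set.empty_inter]
    · show c (Fin.last k) ∩ Set.Icc 1 n = X ∩ Set.Icc 1 n
      rw [hlast]
  · rintro ⟨c, hmono, hcoc, h0, hlast⟩
    refine ⟨fun i => extC n r (c i), ?_, ?_, ?_, ?_⟩
    · intro i j hij
      show extC n r (c i) < extC n r (c j)
      have hcij := hmono hij
      refine lt_of_le_of_ne (extC_mono hcij.le) (fun h => hcij.ne ?_)
      have hgi : c i ⊆ Set.Icc 1 n := hME ▸ unionCocirc_subset_ground (hcoc i)
      have hgj : c j ⊆ Set.Icc 1 n := hME ▸ unionCocirc_subset_ground (hcoc j)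
      rw [← extC_inter_E hgi, ← extC_inter_E hgj, h]
    · intro i
      exact rep_ext hrn hME hMB hE1 hres1 hpar1 hloop1 hE2 hres2 hpar2 hloop2 hEh hU (hcoc i)
    · show extC n r (c 0) = ∅
      rw [h0]
      simp [extC]
    · show extC n r (c (Fin.last k)) = X
      rw [hlast]
      exact hXeq.symm


end NL
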